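/- (Determinant of the delocalization operator, finite-dimensional form.) Let n ≥ 1 and let W : Fin n → ℝ satisfy W i > 0 for all i. Let E be the n×n real matrix with entries E i j = (if i = j then 1 else 0) + 1/n − (W i)⁻¹·(W j)/n. Then det E = ( (∑ᵢ W i)/n ) · ( (∑ᵢ (W i)⁻¹)/n ). Moreover det E ≥ 1, and det E = 1 if and only if W is constant (W i = W j for all i, j). -/

import Mathlib

open Matrix BigOperators Finset

/-- The discrete delocalization matrix:
`E i j = δᵢⱼ + 1/n − (W i)⁻¹·(W j)/n`. -/
noncomputable def discreteDeloc (n : ℕ) (W : Fin n → ℝ) : Matrix (Fin n) (Fin n) ℝ :=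
  Matrix.of fun i j => (if i = j then (1 : ℝ) else 0) + 1 / (n : ℝ) - (W i)⁻¹ * W j / (n : ℝ)

lemma deloc_det (n : ℕ) (hn : 1 ≤ n) (W : Fin n → ℝ) (hW : ∀ i, 0 < W i) :
    (discreteDeloc n W).det = ((∑ i, W i) / (n : ℝ)) * ((∑ i, (W i)⁻¹) / (n : ℝ)) := by
  have hn0 : (n : ℝ) ≠ 0 := Nat.cast_ne_zero.mpr (by omega)
  have hAB : discreteDeloc n W =
      1 + (Matrix.of fun i (k : Fin 2) => if k = 0 then 1/(n:ℝ) else -(W i)⁻¹/n) *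
        (Matrix.of fun (k : Fin 2) j => if k = 0 then 1 else W j) := by
    ext i j
    simp [discreteDeloc, Matrix.mul_apply, Fin.sum_univ_two, Matrix.one_apply]
    split <;> ring
  rw [hAB, Matrix.det_one_add_mul_comm, Matrix.det_fin_two]
  simp only [Matrix.add_apply, Matrix.mul_apply, Matrix.one_apply, Matrix.of_apply]
  norm_num
  have h11 : ∑ i : Fin n, W i * (-(W i)⁻¹/(n:ℝ)) = -1 := by
    have : ∀ i : Fin n, W i * (-(W i)⁻¹/n) = -(1/n) := by
      intro i
      rw [mul_div_assoc', mul_neg, mul_inv_cancel₀ (hW i).ne', neg_div]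
    rw [Finset.sum_congr rfl fun i _ => this i]
    simp [Finset.card_univ]
    field_simp
  rw [h11, mul_inv_cancel₀ hn0]
  simp only [neg_div, Finset.sum_neg_distrib, ← Finset.sum_div, div_eq_mul_inv (W _)]
  rw [← Finset.sum_mul]
  field_simp
  ring

lemma key (n : ℕ) (W : Fin n → ℝ) (hW : ∀ i, 0 < W i) :
    (n:ℝ)^2 ≤ (∑ i, W i) * (∑ i, (W i)⁻¹) ∧
    ((∑ i, W i) * (∑ i, (W i)⁻¹) = (n:ℝ)^2 ↔ ∀ i j, W i = W j) := by
  have e1 : ∀ i j : Fin n, (W i - W j)^2 / (W i * W j)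
      = W i * (W j)⁻¹ + W j * (W i)⁻¹ - 2 := by
    intro i j
    have hi := (hW i).ne'
    have hj := (hW j).ne'
    field_simp
    ring
  have hP : ∑ i, ∑ j, W i * (W j)⁻¹ = (∑ i, W i) * (∑ j, (W j)⁻¹) := by
    rw [Finset.sum_mul_sum]
  have hswap : ∑ i : Fin n, ∑ j : Fin n, W j * (W i)⁻¹
      = ∑ i : Fin n, ∑ j : Fin n, W i * (W j)⁻¹ := Finset.sum_comm
  have hconst : ∑ _i : Fin n, ∑ _j : Fin n, (2:ℝ) = 2 * (n:ℝ)^2 := by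
    simp [Finset.card_univ]
    ring
  have hDsum : ∑ i, ∑ j, (W i - W j)^2 / (W i * W j)
      = 2 * ((∑ i, W i) * (∑ i, (W i)⁻¹)) - 2 * (n:ℝ)^2 := by
    simp only [e1, Finset.sum_sub_distrib, Finset.sum_add_distrib]
    rw [hswap, hP, hconst]
    ring
  have hDnn : ∀ p ∈ Finset.univ ×ˢ Finset.univ,
      (0:ℝ) ≤ (W p.1 - W p.2)^2 / (W p.1 * W p.2) := by
    intro p _
    exact div_nonneg (sq_nonneg _) (mul_pos (hW p.1) (hW p.2)).le
  have hDprod : ∑ i, ∑ j, (W i - W j)^2 / (W i * W j)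
      = ∑ p ∈ Finset.univ ×ˢ Finset.univ, (W p.1 - W p.2)^2 / (W p.1 * W p.2) := by
    rw [Finset.sum_product]
  have hnn : (0:ℝ) ≤ ∑ i, ∑ j, (W i - W j)^2 / (W i * W j) := by
    rw [hDprod]
    exact Finset.sum_nonneg hDnn
  constructor
  · linarith [hDsum, hnn]
  constructor
  · intro hEq
    have hz : ∑ p ∈ Finset.univ ×ˢ Finset.univ, (W p.1 - W p.2)^2 / (W p.1 * W p.2) = 0 := by
      rw [← hDprod]; linarith [hDsum]
    intro i j
    have := (Finset.sum_eq_zero_iff_of_nonneg hDnn).mp hz (i, j) (by simp)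
    have hpos := (mul_pos (hW i) (hW j)).ne'
    field_simp at this
    exact sub_eq_zero.mp ((pow_eq_zero_iff two_ne_zero).mp ((div_eq_zero_iff.mp this).resolve_right hpos))
  · intro hc
    have : ∀ i : Fin n, ∀ j : Fin n, (W i - W j)^2 / (W i * W j) = 0 := by
      intro i j
      rw [hc i j]
      simp
    have hz : ∑ i, ∑ j, (W i - W j)^2 / (W i * W j) = 0 := by
      simp [this]
    linarith [hDsum, hz]

/-- Determinant of the delocalization operator, finite-dimensional form.
For `n ≥ 1` and `W : Fin n → ℝ` pointwise positive,
`det E = ((∑ᵢ W i)/n)·((∑ᵢ (W i)⁻¹)/n)`; moreover `det E ≥ 1`, with equality iff `W`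
is constant. -/
theorem discreteDeloc_det (n : ℕ) (hn : 1 ≤ n) (W : Fin n → ℝ) (hW : ∀ i, 0 < W i) :
    (discreteDeloc n W).det = ((∑ i, W i) / (n : ℝ)) * ((∑ i, (W i)⁻¹) / (n : ℝ)) ∧
    1 ≤ (discreteDeloc n W).det ∧
    ((discreteDeloc n W).det = 1 ↔ ∀ i j, W i = W j) := by
  obtain ⟨hle, hiff⟩ := key n W hW
  have hdet := deloc_det n hn W hW
  have hn2 : (0:ℝ) < (n:ℝ)^2 := by positivity
  have hdiv : (discreteDeloc n W).det = ((∑ i, W i) * (∑ i, (W i)⁻¹)) / (n:ℝ)^2 := by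
    rw [hdet, div_mul_div_comm, sq]
  refine ⟨hdet, ?_, ?_⟩
  · rw [hdiv, le_div_iff₀ hn2, one_mul]
    exact hle
  · rw [hdiv, div_eq_one_iff_eq hn2.ne']
    exact hiff
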